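/- For every integer k ≥ 1, Σ_{j=1}^{k} (k choose j) · 2^j · ((2^{j+1} - 1)/(j+1)) · B_{j+1} = 1/2 - (-1)^{⌊k/2⌋} · E_k / 2, relating Bernoulli and Euler numbers. -/

import Mathlib

/-- Euler numbers: `E n` is the `n`-th Taylor coefficient (times `n!`) of `1/cos` at `0`. -/
noncomputable def eulerNumber (n : ℕ) : ℝ :=
  iteratedDeriv n (fun x : ℝ => (Real.cos x)⁻¹) 0


open Finset Real Set

theorem myLeibniz {f g : ℝ → ℝ} {s : Set ℝ}
    (hu : UniqueDiffOn ℝ s)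
    (hf : ContDiffOn ℝ (⊤ : ℕ∞) f s) (hg : ContDiffOn ℝ (⊤ : ℕ∞) g s) :
    ∀ (n : ℕ) ⦃x : ℝ⦄, x ∈ s →
      iteratedDerivWithin n (fun y => f y * g y) s x
        = ∑ j ∈ Finset.range (n + 1),
            (n.choose j : ℝ) * iteratedDerivWithin j f s x
              * iteratedDerivWithin (n - j) g s x := by
  intro n
  induction n with
  | zero => intro x hx; simp
  | succ n IH =>
    intro x hx
    have hdf : ∀ (j : ℕ) ⦃y : ℝ⦄, y ∈ s →
        DifferentiableWithinAt ℝ (iteratedDerivWithin j f s) s y := fun j y hy =>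
      (hf.differentiableOn_iteratedDerivWithin
        (by exact_mod_cast WithTop.coe_lt_top _) hu) y hy
    have hdg : ∀ (j : ℕ) ⦃y : ℝ⦄, y ∈ s →
        DifferentiableWithinAt ℝ (iteratedDerivWithin j g s) s y := fun j y hy =>
      (hg.differentiableOn_iteratedDerivWithin
        (by exact_mod_cast WithTop.coe_lt_top _) hu) y hy
    have step : iteratedDerivWithin (n + 1) (fun y => f y * g y) s x
        = derivWithin (fun y => ∑ j ∈ Finset.range (n + 1),
            (n.choose j : ℝ) * (iteratedDerivWithin j f s y
              * iteratedDerivWithin (n - j) g s y)) s x := by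
      rw [iteratedDerivWithin_succ]
      refine derivWithin_congr (fun y hy => ?_) ?_
      · rw [IH hy]; simp [mul_assoc]
      · rw [IH hx]; simp [mul_assoc]
    rw [step, derivWithin_fun_sum (A := fun j y => (n.choose j : ℝ) * (iteratedDerivWithin j f s y
      * iteratedDerivWithin (n - j) g s y)) (fun j hj => (((hdf j hx).mul (hdg (n-j) hx)).const_mul _))]
    have hterm : ∀ j ∈ Finset.range (n + 1),
        derivWithin (fun y => (n.choose j : ℝ) * (iteratedDerivWithin j f s y
          * iteratedDerivWithin (n - j) g s y)) s x
        = (n.choose j : ℝ) * (iteratedDerivWithin (j+1) f s x * iteratedDerivWithin (n - j) g s x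
            + iteratedDerivWithin j f s x * iteratedDerivWithin (n - j + 1) g s x) := by
      intro j hj
      rw [derivWithin_const_mul (d := fun y => iteratedDerivWithin j f s y
          * iteratedDerivWithin (n - j) g s y) _ ((hdf j hx).mul (hdg (n-j) hx)),
        derivWithin_fun_mul (hdf j hx) (hdg (n-j) hx),
        ← iteratedDerivWithin_succ, ← iteratedDerivWithin_succ]
    rw [Finset.sum_congr rfl hterm]
    -- now pure algebra with binomials
    set A : ℕ → ℝ := fun j => iteratedDerivWithin j f s x with hA
    set B : ℕ → ℝ := fun j => iteratedDerivWithin j g s x with hB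
    have expand : ∑ j ∈ Finset.range (n + 1), (n.choose j : ℝ) *
          (A (j+1) * B (n - j) + A j * B (n - j + 1))
        = (∑ j ∈ Finset.range (n + 1), (n.choose j : ℝ) * (A (j+1) * B (n - j)))
          + ∑ j ∈ Finset.range (n + 1), (n.choose j : ℝ) * (A j * B (n + 1 - j)) := by
      rw [← Finset.sum_add_distrib]
      refine Finset.sum_congr rfl fun j hj => ?_
      have hjn : j ≤ n := Nat.lt_succ_iff.mp (Finset.mem_range.mp hj)
      have : n - j + 1 = n + 1 - j := by omega
      rw [this, mul_add]
    rw [expand]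
    have rhs_expand : ∑ j ∈ Finset.range (n + 2), ((n+1).choose j : ℝ) * A j * B (n + 1 - j)
        = (((n+1).choose 0 : ℝ) * A 0 * B (n+1))
          + ∑ j ∈ Finset.range (n + 1), ((n+1).choose (j+1) : ℝ) * A (j+1) * B (n - j) := by
      rw [Finset.sum_range_succ' (fun j => ((n+1).choose j : ℝ) * A j * B (n + 1 - j)) (n+1)]
      rw [add_comm]
      congr 1
      refine Finset.sum_congr rfl fun j hj => ?_
      have : n + 1 - (j + 1) = n - j := by omega
      rw [this]
    rw [rhs_expand]
    simp only [Nat.choose_succ_succ, Nat.cast_add]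
    have split2 : ∑ j ∈ Finset.range (n + 1),
          ((n.choose j : ℝ) + (n.choose (j+1) : ℝ)) * A (j+1) * B (n - j)
        = (∑ j ∈ Finset.range (n + 1), (n.choose j : ℝ) * (A (j+1) * B (n - j)))
          + ∑ j ∈ Finset.range (n + 1), (n.choose (j+1) : ℝ) * A (j+1) * B (n - j) := by
      rw [← Finset.sum_add_distrib]
      exact Finset.sum_congr rfl fun j hj => by ring
    rw [split2]
    have last : (((n+1).choose 0 : ℝ) * A 0 * B (n+1))
          + ∑ j ∈ Finset.range (n + 1), (n.choose (j+1) : ℝ) * A (j+1) * B (n - j)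
        = ∑ j ∈ Finset.range (n + 1), (n.choose j : ℝ) * (A j * B (n + 1 - j)) := by
      rw [Finset.sum_range_succ' (fun j => (n.choose j : ℝ) * (A j * B (n + 1 - j))) n]
      have h1 : ∑ j ∈ Finset.range (n + 1), (n.choose (j+1) : ℝ) * A (j+1) * B (n - j)
          = ∑ j ∈ Finset.range n, (n.choose (j+1) : ℝ) * (A (j+1) * B (n + 1 - (j+1))) := by
        rw [Finset.sum_range_succ]
        simp only [Nat.choose_succ_self, Nat.cast_zero, zero_mul, add_zero]
        refine Finset.sum_congr rfl fun j hj => ?_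
        have : n + 1 - (j + 1) = n - j := by omega
        rw [this]; ring
      rw [h1]
      simp [add_comm]
    linarith [last]

-- values of iterated derivatives of basic functions

lemma iteratedDeriv_const_fun : ∀ (n : ℕ) (c x : ℝ),
    iteratedDeriv n (fun _ : ℝ => c) x = if n = 0 then c else 0 := by
  intro n
  induction n with
  | zero => intro c x; simp
  | succ n ih =>
    intro c x
    rw [iteratedDeriv_succ']
    have hd : deriv (fun _ : ℝ => c) = fun _ : ℝ => (0 : ℝ) := by
      funext y; simp
    rw [hd, ih]
    simp

lemma iteratedDeriv_cos_two_step (n : ℕ) (x : ℝ) :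
    iteratedDeriv (n + 2) Real.cos x = - iteratedDeriv n Real.cos x := by
  have h1 : iteratedDeriv (n + 2) Real.cos x
      = iteratedDeriv (n + 1) (deriv Real.cos) x := by
    rw [iteratedDeriv_succ']
  rw [h1, Real.deriv_cos']
  have h2 : iteratedDeriv (n + 1) (fun y => -Real.sin y) x
      = iteratedDeriv n (deriv (fun y => -Real.sin y)) x := by
    rw [iteratedDeriv_succ']
  rw [h2]
  have h3 : deriv (fun y => -Real.sin y) = fun y => -Real.cos y := by
    funext y
    rw [deriv.fun_neg, Real.deriv_sin]
  rw [h3, iteratedDeriv_fun_neg]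

lemma iteratedDeriv_cosh_two_step (n : ℕ) (x : ℝ) :
    iteratedDeriv (n + 2) Real.cosh x = iteratedDeriv n Real.cosh x := by
  have h1 : iteratedDeriv (n + 2) Real.cosh x
      = iteratedDeriv (n + 1) (deriv Real.cosh) x := by
    rw [iteratedDeriv_succ']
  rw [h1, Real.deriv_cosh]
  have h2 : iteratedDeriv (n + 1) Real.sinh x
      = iteratedDeriv n (deriv Real.sinh) x := by
    rw [iteratedDeriv_succ']
  rw [h2, Real.deriv_sinh]

lemma iteratedDeriv_cos_zero : ∀ n : ℕ,
    iteratedDeriv n Real.cos 0 = if Even n then (-1 : ℝ) ^ (n / 2) else 0 := by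
  intro n
  induction n using Nat.strong_induction_on with
  | _ n IH =>
    match n with
    | 0 => simp
    | 1 => rw [iteratedDeriv_one, Real.deriv_cos]; simp [Nat.even_iff]
    | (m + 2) =>
      rw [iteratedDeriv_cos_two_step, IH m (by omega)]
      have hpar : Even (m + 2) ↔ Even m := by simp [Nat.even_add]
      have hdiv : (m + 2) / 2 = m / 2 + 1 := by omega
      by_cases h : Even m
      · rw [if_pos h, if_pos (hpar.mpr h), hdiv, pow_succ]
        ring
      · rw [if_neg h, if_neg (fun hc => h (hpar.mp hc)), neg_zero]

lemma iteratedDeriv_cosh_zero : ∀ n : ℕ,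
    iteratedDeriv n Real.cosh 0 = if Even n then (1 : ℝ) else 0 := by
  intro n
  induction n using Nat.strong_induction_on with
  | _ n IH =>
    match n with
    | 0 => simp
    | 1 => rw [iteratedDeriv_one, Real.deriv_cosh]; simp [Nat.even_iff]
    | (m + 2) =>
      rw [iteratedDeriv_cosh_two_step, IH m (by omega)]
      have hpar : Even (m + 2) ↔ Even m := by simp [Nat.even_add]
      by_cases h : Even m
      · rw [if_pos h, if_pos (hpar.mpr h)]
      · rw [if_neg h, if_neg (fun hc => h (hpar.mp hc))]

lemma iteratedDeriv_exp_zero (n : ℕ) : iteratedDeriv n Real.exp 0 = 1 := by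
  have h : Real.exp = fun x => Real.exp (1 * x) := by funext x; rw [one_mul]
  rw [h, iteratedDeriv_exp_const_mul]
  simp

section MainSetup

local notation "S" => Set.Ioo (-1 : ℝ) 1

lemma h0S : (0 : ℝ) ∈ S := by constructor <;> norm_num

lemma hUS : UniqueDiffOn ℝ S := isOpen_Ioo.uniqueDiffOn

lemma iDW_eq (f : ℝ → ℝ) (n : ℕ) :
    iteratedDerivWithin n f S 0 = iteratedDeriv n f 0 := by
  rw [iteratedDerivWithin_eq_iteratedFDerivWithin,
    iteratedFDerivWithin_of_isOpen n isOpen_Ioo h0S, iteratedDeriv_eq_iteratedFDeriv]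

lemma cos_ne_zero_on_S {x : ℝ} (hx : x ∈ S) : Real.cos x ≠ 0 := by
  have hpi : (1 : ℝ) < π / 2 := by
    have := Real.pi_gt_three
    linarith
  exact (Real.cos_pos_of_mem_Ioo ⟨by linarith [hx.1], by linarith [hx.2]⟩).ne'

-- generic recurrence from a product being constant on S
lemma recurrence {f g : ℝ → ℝ} (c : ℝ)
    (hfg : Set.EqOn (fun y => f y * g y) (fun _ => c) S)
    (hf : ContDiffOn ℝ (⊤ : ℕ∞) f S) (hg : ContDiffOn ℝ (⊤ : ℕ∞) g S) (n : ℕ) :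
    ∑ j ∈ Finset.range (n + 1),
        (n.choose j : ℝ) * iteratedDeriv j f 0 * iteratedDeriv (n - j) g 0
      = if n = 0 then c else 0 := by
  have h1 := myLeibniz hUS hf hg n h0S
  have h2 : iteratedDerivWithin n (fun y => f y * g y) S 0
      = iteratedDerivWithin n (fun _ : ℝ => c) S 0 :=
    iteratedDerivWithin_congr hfg h0S
  rw [h2, iDW_eq, iteratedDeriv_const_fun] at h1
  have h3 : ∑ j ∈ Finset.range (n + 1),
        (n.choose j : ℝ) * iteratedDeriv j f 0 * iteratedDeriv (n - j) g 0
      = ∑ j ∈ Finset.range (n + 1),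
        (n.choose j : ℝ) * iteratedDerivWithin j f S 0 * iteratedDerivWithin (n - j) g S 0 :=
    Finset.sum_congr rfl fun j hj => by rw [iDW_eq, iDW_eq]
  rw [h3, ← h1]

end MainSetup

section PS
open PowerSeries

noncomputable def aq : ℕ → ℚ := fun j => 2 ^ j * (2 ^ (j + 1) - 1) / (j + 1) * bernoulli (j + 1)

lemma aq_rec (n : ℕ) :
    2 * aq n + ∑ j ∈ Finset.range n, (n.choose j : ℚ) * 2 ^ (n - j) * aq j
      = if n = 0 then -1 else 0 := by
  classical
  set B : ℚ⟦X⟧ := bernoulliPowerSeries ℚ with hB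
  set E : ℚ⟦X⟧ := rescale (2 : ℚ) (exp ℚ) with hE
  set Fq : ℚ⟦X⟧ := PowerSeries.mk (fun j => aq j / (j.factorial : ℚ)) with hF
  have hEE : E * E = rescale (4 : ℚ) (exp ℚ) := by
    rw [hE, exp_mul_exp_eq_exp_add]; norm_num
  have hresX : ∀ a : ℚ, rescale a (X : ℚ⟦X⟧) = C a * X := by
    intro a
    ext n
    simp only [coeff_rescale, coeff_X, coeff_C_mul]
    split_ifs with h <;> simp [h]
  have h4 : rescale (4 : ℚ) B * (rescale (4 : ℚ) (exp ℚ) - 1) = C (4:ℚ) * X := by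
    rw [← hresX, ← map_one (rescale (4:ℚ)), ← map_sub, ← map_mul,
      bernoulliPowerSeries_mul_exp_sub_one]
  have h2 : rescale (2 : ℚ) B * (E - 1) = C (2:ℚ) * X := by
    rw [hE, ← hresX, ← map_one (rescale (2:ℚ)), ← map_sub, ← map_mul,
      bernoulliPowerSeries_mul_exp_sub_one]
  have hC4 : (C (4:ℚ) : ℚ⟦X⟧) = 4 := by simp [map_ofNat]
  have hC2 : (C (2:ℚ) : ℚ⟦X⟧) = 2 := by simp [map_ofNat]
  have hXF : (2 * X) * Fq = rescale (4 : ℚ) B - rescale (2 : ℚ) B := by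
    have h2X : (2 * X : ℚ⟦X⟧) * Fq = C (2:ℚ) * (X * Fq) := by rw [hC2]; ring
    rw [h2X]
    ext n
    rw [map_sub, coeff_C_mul]
    cases n with
    | zero =>
      simp [coeff_rescale, hB, bernoulliPowerSeries, coeff_mk]
    | succ m =>
      rw [coeff_succ_X_mul]
      simp only [coeff_rescale, hB, bernoulliPowerSeries, coeff_mk, hF, aq, Algebra.algebraMap_self_apply]
      have hfac : ((m+1).factorial : ℚ) = (m+1) * m.factorial := by
        push_cast [Nat.factorial_succ]; ring
      have hm1 : ((m:ℚ)+1) ≠ 0 := by positivity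
      have hmf : (m.factorial : ℚ) ≠ 0 := Nat.cast_ne_zero.mpr m.factorial_ne_zero
      field_simp [hfac]
      rw [hfac]
      push_cast
      rw [show (4:ℚ) = 2^2 by norm_num, ← pow_mul]
      ring
  have hE1ne : E - 1 ≠ 0 := by
    intro hcon
    have : (PowerSeries.coeff 1) (E - 1) = 0 := by rw [hcon]; simp
    rw [map_sub, hE, coeff_rescale, coeff_exp] at this
    simp [Nat.factorial] at this
  have h2Xne : (2 * X : ℚ⟦X⟧) ≠ 0 := by
    intro hcon
    have : (PowerSeries.coeff 1) (2 * X : ℚ⟦X⟧) = 0 := by rw [hcon]; simp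
    rw [← hC2, coeff_C_mul] at this
    simp at this
  have hstep : ((rescale (4:ℚ) B - rescale (2:ℚ) B) * (E + 1)) * (E - 1)
      = (-(2 * X)) * (E - 1) := by
    have expand : ((rescale (4:ℚ) B - rescale (2:ℚ) B) * (E + 1)) * (E - 1)
        = rescale (4:ℚ) B * (E * E - 1) - (rescale (2:ℚ) B * (E - 1)) * (E + 1) := by ring
    rw [expand, hEE, h4, h2, hC4, hC2]
    ring
  have hcancel1 : (rescale (4:ℚ) B - rescale (2:ℚ) B) * (E + 1) = -(2 * X) :=
    mul_right_cancel₀ hE1ne hstep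
  have hcancel2 : Fq * (E + 1) = -1 := by
    apply mul_left_cancel₀ h2Xne
    rw [← mul_assoc, hXF, hcancel1]
    ring
  -- coefficient extraction
  have hcoeff := congrArg (PowerSeries.coeff n) hcancel2
  rw [coeff_mul] at hcoeff
  rw [Finset.Nat.sum_antidiagonal_eq_sum_range_succ_mk] at hcoeff
  have hterm : ∀ p ∈ Finset.range (n+1),
      (PowerSeries.coeff p) Fq * (PowerSeries.coeff (n - p)) (E + 1)
      = aq p / p.factorial * (2 ^ (n-p) * ((n-p).factorial : ℚ)⁻¹
          + if n - p = 0 then 1 else 0) := by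
    intro p hp
    rw [hF, coeff_mk, map_add, hE, coeff_rescale, coeff_exp, coeff_one]
    simp [algebraMap, div_eq_mul_inv]
  rw [Finset.sum_congr rfl hterm] at hcoeff
  rcases Nat.eq_zero_or_pos n with hn0 | hn0
  · subst hn0
    norm_num [aq, bernoulli_one]
  · have hn0' : n ≠ 0 := hn0.ne'
    rw [if_neg hn0']
    rw [map_neg, coeff_one, if_neg hn0', Finset.sum_range_succ,
      Nat.sub_self, pow_zero, Nat.factorial_zero, Nat.cast_one, inv_one, if_pos rfl] at hcoeff
    have hne : (n.factorial : ℚ) ≠ 0 := Nat.cast_ne_zero.mpr n.factorial_ne_zero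
    have hsum : ∀ p ∈ Finset.range n,
        (n.factorial : ℚ) * (aq p / p.factorial * (2 ^ (n-p) * ((n-p).factorial : ℚ)⁻¹
          + if n - p = 0 then 1 else 0))
        = (n.choose p : ℚ) * 2 ^ (n-p) * aq p := by
      intro p hp
      have hpn : p < n := Finset.mem_range.mp hp
      have hnp : ¬ (n - p = 0) := by omega
      rw [if_neg hnp, Nat.cast_choose ℚ hpn.le]
      have h1 : (p.factorial : ℚ) ≠ 0 := Nat.cast_ne_zero.mpr p.factorial_ne_zero
      have h2 : ((n-p).factorial : ℚ) ≠ 0 := Nat.cast_ne_zero.mpr (n-p).factorial_ne_zero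
      field_simp
      ring
    have hs : ∑ j ∈ Finset.range n, (n.choose j : ℚ) * 2 ^ (n - j) * aq j
        = (n.factorial : ℚ) * ∑ x ∈ Finset.range n,
            (aq x / x.factorial * (2 ^ (n-x) * ((n-x).factorial : ℚ)⁻¹
              + if n - x = 0 then 1 else 0)) := by
      rw [Finset.mul_sum]
      exact Finset.sum_congr rfl (fun p hp => (hsum p hp).symm)
    rw [hs]
    have hS2 : ∑ x ∈ Finset.range n,
        (aq x / x.factorial * (2 ^ (n-x) * ((n-x).factorial : ℚ)⁻¹
          + if n - x = 0 then 1 else 0))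
        = -(aq n / n.factorial * (1 * 1 + 1)) := by linarith [hcoeff]
    rw [hS2]
    field_simp
    ring

end PS

-- parity helpers
lemma neg_one_pow_mod {a b : ℕ} (h : a % 2 = b % 2) : (-1 : ℝ) ^ a = (-1) ^ b := by
  rcases Nat.even_or_odd a with ha | ha
  · have hb : Even b := by rw [Nat.even_iff] at *; omega
    rw [ha.neg_one_pow, hb.neg_one_pow]
  · have hb : Odd b := by rw [Nat.odd_iff] at *; omega
    rw [ha.neg_one_pow, hb.neg_one_pow]

lemma odd_deriv_zero {f : ℝ → ℝ} (hf : ∀ x, f (-x) = f x) {n : ℕ} (hn : Odd n) :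
    iteratedDeriv n f 0 = 0 := by
  have h := iteratedDeriv_comp_neg n f 0
  rw [neg_zero, funext hf, hn.neg_one_pow] at h
  have : iteratedDeriv n f 0 = -iteratedDeriv n f 0 := by
    simpa using h
  linarith

section Main

local notation "S" => Set.Ioo (-1 : ℝ) 1

-- smoothness
lemma smooth_sec : ContDiffOn ℝ (⊤ : ℕ∞) (fun x => (Real.cos x)⁻¹) S :=
  ContDiffOn.inv Real.contDiff_cos.contDiffOn fun x hx => cos_ne_zero_on_S hx

lemma smooth_sech : ContDiffOn ℝ (⊤ : ℕ∞) (fun x => (Real.cosh x)⁻¹) S :=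
  ContDiffOn.inv Real.contDiff_cosh.contDiffOn fun x _ => (Real.cosh_pos x).ne'

lemma v_pos (x : ℝ) : (0:ℝ) < 1 + Real.exp (2 * x) := by positivity

lemma smooth_v : ContDiffOn ℝ (⊤ : ℕ∞) (fun x => 1 + Real.exp (2 * x)) S :=
  (contDiff_const.add (Real.contDiff_exp.comp (contDiff_const.mul contDiff_id))).contDiffOn

lemma smooth_u : ContDiffOn ℝ (⊤ : ℕ∞) (fun x => -(1 + Real.exp (2 * x))⁻¹) S :=
  (smooth_v.inv fun x _ => (v_pos x).ne').neg

-- derivative values of v at 0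
lemma v_val (m : ℕ) :
    iteratedDeriv m (fun x => 1 + Real.exp (2 * x)) 0 = if m = 0 then 2 else 2 ^ m := by
  cases m with
  | zero => norm_num [iteratedDeriv_zero]
  | succ m =>
    rw [← iDW_eq]
    rw [iteratedDerivWithin_const_add (Nat.succ_pos m) 1]
    rw [iDW_eq, iteratedDeriv_exp_const_mul]
    simp

-- the three recurrences
lemma rec_sec (n : ℕ) :
    ∑ j ∈ Finset.range (n + 1), (n.choose j : ℝ)
        * iteratedDeriv j (fun x => (Real.cos x)⁻¹) 0 * iteratedDeriv (n - j) Real.cos 0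
      = if n = 0 then 1 else 0 := by
  refine recurrence 1 (fun x hx => ?_) smooth_sec Real.contDiff_cos.contDiffOn n
  exact inv_mul_cancel₀ (cos_ne_zero_on_S hx)

lemma rec_sech (n : ℕ) :
    ∑ j ∈ Finset.range (n + 1), (n.choose j : ℝ)
        * iteratedDeriv j (fun x => (Real.cosh x)⁻¹) 0 * iteratedDeriv (n - j) Real.cosh 0
      = if n = 0 then 1 else 0 := by
  refine recurrence 1 (fun x hx => ?_) smooth_sech Real.contDiff_cosh.contDiffOn n
  exact inv_mul_cancel₀ (Real.cosh_pos x).ne'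

lemma rec_u (n : ℕ) :
    ∑ j ∈ Finset.range (n + 1), (n.choose j : ℝ)
        * iteratedDeriv j (fun x => -(1 + Real.exp (2 * x))⁻¹) 0
        * iteratedDeriv (n - j) (fun x => 1 + Real.exp (2 * x)) 0
      = if n = 0 then -1 else 0 := by
  refine recurrence (-1) (fun x hx => ?_) smooth_u smooth_v n
  simp only
  rw [neg_mul, inv_mul_cancel₀ (v_pos x).ne']

end Main

section Main2

local notation "S" => Set.Ioo (-1 : ℝ) 1

lemma sech_sec : ∀ n : ℕ, iteratedDeriv n (fun x => (Real.cosh x)⁻¹) 0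
    = (-1 : ℝ) ^ (n / 2) * iteratedDeriv n (fun x => (Real.cos x)⁻¹) 0 := by
  intro n
  induction n using Nat.strong_induction_on with
  | _ n IH =>
    have hsech_even : ∀ x : ℝ, (Real.cosh (-x))⁻¹ = (Real.cosh x)⁻¹ := fun x => by
      rw [Real.cosh_neg]
    have hsec_even : ∀ x : ℝ, (Real.cos (-x))⁻¹ = (Real.cos x)⁻¹ := fun x => by
      rw [Real.cos_neg]
    rcases Nat.even_or_odd n with hn | hn
    · by_cases hn0 : n = 0
      · subst hn0; norm_num [iteratedDeriv_zero]
      · have h1 := rec_sec n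
        have h2 := rec_sech n
        rw [if_neg hn0] at h1 h2
        rw [Finset.sum_range_succ, Nat.sub_self, Nat.choose_self] at h1 h2
        rw [iteratedDeriv_cos_zero 0, if_pos (Even.zero)] at h1
        rw [iteratedDeriv_cosh_zero 0, if_pos (Even.zero)] at h2
        norm_num at h1 h2
        have hterm : ∀ j ∈ Finset.range n,
            (n.choose j : ℝ) * iteratedDeriv j (fun x => (Real.cosh x)⁻¹) 0
              * iteratedDeriv (n - j) Real.cosh 0
            = (-1 : ℝ) ^ (n / 2) * ((n.choose j : ℝ)
              * iteratedDeriv j (fun x => (Real.cos x)⁻¹) 0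
              * iteratedDeriv (n - j) Real.cos 0) := by
          intro j hj
          have hjn : j < n := Finset.mem_range.mp hj
          rcases Nat.even_or_odd j with hj2 | hj2
          · have hnj : Even (n - j) := by
              rw [Nat.even_iff] at *; omega
            rw [IH j hjn, iteratedDeriv_cos_zero, iteratedDeriv_cosh_zero,
              if_pos hnj, if_pos hnj]
            have hpow : (-1 : ℝ) ^ (j / 2) = (-1) ^ (n / 2) * (-1) ^ ((n - j) / 2) := by
              rw [← pow_add]
              refine neg_one_pow_mod ?_
              rw [Nat.even_iff] at hn hj2
              omega
            rw [hpow]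
            ring
          · have hnj : ¬ Even (n - j) := by
              rw [Nat.even_iff] at *; rw [Nat.odd_iff] at hj2; omega
            rw [odd_deriv_zero hsech_even hj2, odd_deriv_zero hsec_even hj2,
              iteratedDeriv_cos_zero, if_neg hnj]
            ring
        have hsum : ∑ j ∈ Finset.range n, (n.choose j : ℝ)
              * iteratedDeriv j (fun x => (Real.cosh x)⁻¹) 0
              * iteratedDeriv (n - j) Real.cosh 0
            = (-1 : ℝ) ^ (n / 2) * ∑ j ∈ Finset.range n, ((n.choose j : ℝ)
              * iteratedDeriv j (fun x => (Real.cos x)⁻¹) 0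
              * iteratedDeriv (n - j) Real.cos 0) := by
          rw [Finset.mul_sum]
          exact Finset.sum_congr rfl hterm
        linear_combination h2 - ((-1 : ℝ) ^ (n / 2)) * h1 - hsum
    · rw [odd_deriv_zero hsech_even hn, odd_deriv_zero hsec_even hn]
      ring

lemma aq_rec_real (n : ℕ) :
    2 * ((aq n : ℝ)) + ∑ j ∈ Finset.range n, (n.choose j : ℝ) * 2 ^ (n - j) * (aq j : ℝ)
      = if n = 0 then -1 else 0 := by
  have h := congrArg (fun q : ℚ => (q : ℝ)) (aq_rec n)
  push_cast [apply_ite] at h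
  split_ifs at h ⊢ <;> exact h

lemma u_val : ∀ n : ℕ,
    iteratedDeriv n (fun x => -(1 + Real.exp (2 * x))⁻¹) 0 = (aq n : ℝ) := by
  intro n
  induction n using Nat.strong_induction_on with
  | _ n IH =>
    have h1 := rec_u n
    rw [Finset.sum_range_succ, Nat.sub_self, Nat.choose_self, v_val 0, if_pos rfl] at h1
    norm_num [-iteratedDeriv_fun_neg] at h1
    have hterm : ∀ j ∈ Finset.range n,
        (n.choose j : ℝ) * iteratedDeriv j (fun x => -(1 + Real.exp (2 * x))⁻¹) 0
          * iteratedDeriv (n - j) (fun x => 1 + Real.exp (2 * x)) 0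
        = (n.choose j : ℝ) * 2 ^ (n - j) * (aq j : ℝ) := by
      intro j hj
      have hjn : j < n := Finset.mem_range.mp hj
      rw [IH j hjn, v_val, if_neg (by omega)]
      ring
    rw [Finset.sum_congr rfl hterm] at h1
    have h2 := aq_rec_real n
    linarith

end Main2

section Final

local notation "S" => Set.Ioo (-1 : ℝ) 1

lemma prod_ident (y : ℝ) :
    -(1 + Real.exp (2 * y))⁻¹ * Real.exp y = -(1/2) * (Real.cosh y)⁻¹ := by
  have h2y : Real.exp (2 * y) = Real.exp y * Real.exp y := by
    rw [← Real.exp_add]; ring_nf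
  have hc : Real.cosh y = (Real.exp y + Real.exp (-y)) / 2 := Real.cosh_eq y
  have hey : Real.exp y ≠ 0 := (Real.exp_pos y).ne'
  have hv : (1 : ℝ) + Real.exp (2 * y) ≠ 0 := (v_pos y).ne'
  have hch : Real.cosh y ≠ 0 := (Real.cosh_pos y).ne'
  rw [hc] at hch ⊢
  rw [Real.exp_neg] at hch ⊢
  rw [h2y] at hv ⊢
  field_simp
  ring

lemma main_sum (k : ℕ) :
    ∑ j ∈ Finset.range (k + 1), (k.choose j : ℝ) * (aq j : ℝ)
      = -(1/2) * iteratedDeriv k (fun x => (Real.cosh x)⁻¹) 0 := by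
  have h1 := myLeibniz hUS smooth_u Real.contDiff_exp.contDiffOn k h0S
  have hR : ∑ j ∈ Finset.range (k + 1),
        (k.choose j : ℝ) * iteratedDerivWithin j (fun x => -(1 + Real.exp (2 * x))⁻¹) S 0
          * iteratedDerivWithin (k - j) Real.exp S 0
      = ∑ j ∈ Finset.range (k + 1), (k.choose j : ℝ) * (aq j : ℝ) := by
    refine Finset.sum_congr rfl fun j hj => ?_
    rw [iDW_eq, iDW_eq, u_val j, iteratedDeriv_exp_zero]
    ring
  rw [hR] at h1
  have hL : iteratedDerivWithin k
        (fun y => (fun x => -(1 + Real.exp (2 * x))⁻¹) y * Real.exp y) S 0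
      = iteratedDerivWithin k (fun y => -(1/2) * (Real.cosh y)⁻¹) S 0 :=
    iteratedDerivWithin_congr (fun y _ => prod_ident y) h0S
  rw [hL] at h1
  rw [iteratedDerivWithin_const_mul h0S hUS (-(1/2) : ℝ)
    (smooth_sech.of_le (by exact_mod_cast le_top) 0 h0S), iDW_eq] at h1
  rw [← h1]

theorem bernoulli_euler_relation_aux (k : ℕ) (hk : 1 ≤ k) :
    ∑ j ∈ Finset.Icc 1 k,
        (k.choose j : ℝ) * 2 ^ j * ((2 ^ (j + 1) - 1) / (j + 1)) * (bernoulli (j + 1) : ℝ)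
      = 1 / 2 - (-1 : ℝ) ^ (k / 2) * (iteratedDeriv k (fun x : ℝ => (Real.cos x)⁻¹) 0) / 2 := by
  have hsummand : ∀ j ∈ Finset.Icc 1 k,
      (k.choose j : ℝ) * 2 ^ j * ((2 ^ (j + 1) - 1) / (j + 1)) * (bernoulli (j + 1) : ℝ)
        = (k.choose j : ℝ) * (aq j : ℝ) := by
    intro j hj
    rw [aq]
    push_cast
    ring
  rw [Finset.sum_congr rfl hsummand]
  have hsplit : Finset.range (k + 1) = insert 0 (Finset.Icc 1 k) := by
    ext x
    simp only [Finset.mem_range, Finset.mem_insert, Finset.mem_Icc]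
    omega
  have h0notin : 0 ∉ Finset.Icc 1 k := by simp
  have hmain := main_sum k
  rw [hsplit, Finset.sum_insert h0notin] at hmain
  have haq0 : (aq 0 : ℝ) = -(1/2) := by
    norm_num [aq, bernoulli_one]
  rw [haq0] at hmain
  rw [sech_sec k] at hmain
  have : (k.choose 0 : ℝ) = 1 := by norm_num
  rw [this] at hmain
  linarith [hmain]

end Final


theorem bernoulli_euler_relation (k : ℕ) (hk : 1 ≤ k) :
    ∑ j ∈ Finset.Icc 1 k,
        (k.choose j : ℝ) * 2 ^ j * ((2 ^ (j + 1) - 1) / (j + 1)) * (bernoulli (j + 1) : ℝ)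
      = 1 / 2 - (-1 : ℝ) ^ (k / 2) * eulerNumber k / 2 := by
  unfold eulerNumber
  exact bernoulli_euler_relation_aux k hk
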